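/- In the untyped symmetric λμ-calculus with the βμμ′-reduction: if M and N are strongly normalizing but the application (M N) is not strongly normalizing, then either M ▷* λy P with P[y:=N] not strongly normalizing, or M ▷* μα P with P[α=_r N] not strongly normalizing, or N ▷* μα P with P[α=_l M] not strongly normalizing. -/

import Mathlib

namespace SymLM

/-- Terms of the symmetric λμ-calculus :
T ::= x | λx T | (T T) | μα T | (α T).
λ-variables and μ-variables are two disjoint namespaces, both indexed by ℕ. -/
inductive Lam : Type
| var : ℕ → Lam          -- λ-variable x
| lam : ℕ → Lam → Lam    -- λx M (binds the λ-variable x)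
| app : Lam → Lam → Lam  -- (M N)
| mu  : ℕ → Lam → Lam    -- μα M (binds the μ-variable α)
| name : ℕ → Lam → Lam   -- (α M)

/-- β-substitution M[x:=N] of a term for a λ-variable. -/
def subst : Lam → ℕ → Lam → Lam
| .var y, x, N => if y = x then N else .var y
| .lam y M, x, N => if y = x then .lam y M else .lam y (subst M x N)
| .app M P, x, N => .app (subst M x N) (subst P x N)
| .mu b M, x, N => .mu b (subst M x N)
| .name b M, x, N => .name b (subst M x N)

/-- Direction of a μμ′-substitution: `r` for [α=_r N], `l` for [α=_l N]. -/
inductive Dir : Type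
| l | r

/-- μμ′-substitution: `msubst M α .r N` is M[α=_r N], obtained by replacing each
subterm (α U) of M by (α (U N)); `msubst M α .l N` is M[α=_l N], replacing (α U)
by (α (N U)). -/
def msubst : Lam → ℕ → Dir → Lam → Lam
| .var y, _, _, _ => .var y
| .lam y M, a, d, N => .lam y (msubst M a d N)
| .app M P, a, d, N => .app (msubst M a d N) (msubst P a d N)
| .mu b M, a, d, N => if b = a then .mu b M else .mu b (msubst M a d N)
| .name b M, a, d, N =>
    if b = a then
      match d with
      | .r => .name b (.app (msubst M a d N) N)
      | .l => .name b (.app N (msubst M a d N))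
    else .name b (msubst M a d N)

/-- Simultaneous μμ′-substitution for a partial assignment σ of directions and
terms to μ-variables. -/
def smsubst : (ℕ → Option (Dir × Lam)) → Lam → Lam
| _, .var y => .var y
| σ, .lam y M => .lam y (smsubst σ M)
| σ, .app M P => .app (smsubst σ M) (smsubst σ P)
| σ, .mu b M => .mu b (smsubst (fun c => if c = b then none else σ c) M)
| σ, .name b M =>
    match σ b with
    | some (.r, N) => .name b (.app (smsubst σ M) N)
    | some (.l, N) => .name b (.app N (smsubst σ M))
    | none => .name b (smsubst σ M)

/-- The simultaneous μμ′-substitution [α₁=_{s₁}P₁, ..., α_n=_{s_n}P_n] given as a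
finite list of bindings. -/
def applyM (σ : List (ℕ × Dir × Lam)) (M : Lam) : Lam :=
  smsubst (fun a => σ.lookup a) M

/-- Simultaneous β-substitution for a partial assignment σ of terms to λ-variables. -/
def ssubst : (ℕ → Option Lam) → Lam → Lam
| σ, .var y => (σ y).getD (.var y)
| σ, .lam y M => .lam y (ssubst (fun z => if z = y then none else σ z) M)
| σ, .app M P => .app (ssubst σ M) (ssubst σ P)
| σ, .mu b M => .mu b (ssubst σ M)
| σ, .name b M => .name b (ssubst σ M)

/-- The simultaneous β-substitution [x₁:=N₁, ..., x_k:=N_k] given as a finite list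
of bindings. -/
def applyS (σ : List (ℕ × Lam)) (M : Lam) : Lam :=
  ssubst (fun x => σ.lookup x) M

/-- The iterated application (M P₁ ... P_n). -/
def appList (M : Lam) (l : List Lam) : Lam := l.foldl .app M

/-- Root rule (β) : (λx M N) ▷ M[x:=N]. -/
inductive BetaR : Lam → Lam → Prop
| mk (x : ℕ) (M N : Lam) : BetaR (.app (.lam x M) N) (subst M x N)

/-- Root rule (μ) : (μα M N) ▷ μα M[α=_r N]. -/
inductive MuR : Lam → Lam → Prop
| mk (α : ℕ) (M N : Lam) : MuR (.app (.mu α M) N) (.mu α (msubst M α .r N))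

/-- Root rule (μ′) : (N μα M) ▷ μα M[α=_l N]. -/
inductive MuPR : Lam → Lam → Prop
| mk (α : ℕ) (M N : Lam) : MuPR (.app N (.mu α M)) (.mu α (msubst M α .l N))

/-- One-step reduction: closure of a set `R` of root rules under all contexts. -/
inductive Step (R : Lam → Lam → Prop) : Lam → Lam → Prop
| base {M M'} : R M M' → Step R M M'
| appL {M M' N} : Step R M M' → Step R (.app M N) (.app M' N)
| appR {M N N'} : Step R N N' → Step R (.app M N) (.app M N')
| lam {x M M'} : Step R M M' → Step R (.lam x M) (.lam x M')
| mu {α M M'} : Step R M M' → Step R (.mu α M) (.mu α M')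
| name {α M M'} : Step R M M' → Step R (.name α M) (.name α M')

/-- The root rules of the μμ′-reduction. -/
def mmR : Lam → Lam → Prop := fun M N => MuR M N ∨ MuPR M N

/-- The root rules of the βμμ′-reduction. -/
def bmmR : Lam → Lam → Prop := fun M N => BetaR M N ∨ MuR M N ∨ MuPR M N

/-- `a` is strongly normalizing for the reduction `r` : no infinite `r`-reduction
sequence starts from `a` (accessibility for the reversed relation). -/
def SN {α : Type} (r : α → α → Prop) (a : α) : Prop :=
  Acc (fun x y => r y x) a

/-- Types of the simply typed symmetric λμ-calculus: atoms, ⊥ and A → B. -/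
inductive Ty : Type
| atom : ℕ → Ty
| bot : Ty
| arrow : Ty → Ty → Ty

/-- ¬A abbreviates A → ⊥. -/
def Ty.neg (A : Ty) : Ty := Ty.arrow A Ty.bot

/-- Typing judgment Γ ⊢ M : A.  The context is given by `Γ : ℕ → Ty` for the
λ-variables and `Δ : ℕ → Ty` for the μ-variables, where `Δ α = A` means that the
declaration α : ¬A occurs in the context. -/
inductive Typed : (ℕ → Ty) → (ℕ → Ty) → Lam → Ty → Prop
| var {Γ Δ x A} : Γ x = A → Typed Γ Δ (.var x) A
| lam {Γ Δ x M A B} : Typed (Function.update Γ x A) Δ M B →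
    Typed Γ Δ (.lam x M) (.arrow A B)
| app {Γ Δ M N A B} : Typed Γ Δ M (.arrow A B) → Typed Γ Δ N A →
    Typed Γ Δ (.app M N) B
| mu {Γ Δ α M A} : Typed Γ (Function.update Δ α A) M .bot →
    Typed Γ Δ (.mu α M) A
| name {Γ Δ α M A} : Typed Γ Δ M A → Δ α = A → Typed Γ Δ (.name α M) .bot


open Relation

lemma not_sn_step {r : Lam → Lam → Prop} {a : Lam} (h : ¬ SN (Step r) a) :
    ∃ b, Step r a b ∧ ¬ SN (Step r) b := by
  by_contra hc
  push_neg at hc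
  exact h (Acc.intro a fun b hb => hc b hb)

lemma sn_of_rtg {r : Lam → Lam → Prop} {a b : Lam} (h : SN (Step r) a)
    (hr : ReflTransGen (Step r) a b) : SN (Step r) b := by
  induction hr with
  | refl => exact h
  | tail _ hstep ih => exact ih.inv hstep

lemma sn_mu {a : ℕ} {Q : Lam} (h : SN (Step bmmR) Q) : SN (Step bmmR) (.mu a Q) := by
  induction h with
  | intro Q hQ ih =>
    constructor
    intro b hb
    cases hb with
    | base hr => rcases hr with h | h | h <;> cases h
    | mu hs => exact ih _ hs

lemma rtg_appL {R : Lam → Lam → Prop} {M M' N : Lam} (h : ReflTransGen (Step R) M M') :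
    ReflTransGen (Step R) (.app M N) (.app M' N) :=
  ReflTransGen.lift (fun X => Lam.app X N) (fun _ _ hs => Step.appL hs) _ _ h

lemma rtg_appR {R : Lam → Lam → Prop} {M N N' : Lam} (h : ReflTransGen (Step R) N N') :
    ReflTransGen (Step R) (.app M N) (.app M N') :=
  ReflTransGen.lift (fun X => Lam.app M X) (fun _ _ hs => Step.appR hs) _ _ h

lemma rtg_lam {R : Lam → Lam → Prop} {x : ℕ} {M M' : Lam} (h : ReflTransGen (Step R) M M') :
    ReflTransGen (Step R) (.lam x M) (.lam x M') :=
  ReflTransGen.lift (fun X => Lam.lam x X) (fun _ _ hs => Step.lam hs) _ _ h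

lemma rtg_mu {R : Lam → Lam → Prop} {x : ℕ} {M M' : Lam} (h : ReflTransGen (Step R) M M') :
    ReflTransGen (Step R) (.mu x M) (.mu x M') :=
  ReflTransGen.lift (fun X => Lam.mu x X) (fun _ _ hs => Step.mu hs) _ _ h

lemma rtg_name {R : Lam → Lam → Prop} {x : ℕ} {M M' : Lam} (h : ReflTransGen (Step R) M M') :
    ReflTransGen (Step R) (.name x M) (.name x M') :=
  ReflTransGen.lift (fun X => Lam.name x X) (fun _ _ hs => Step.name hs) _ _ h

lemma subst_step {N N' : Lam} (h : Step bmmR N N') :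
    ∀ (P : Lam) (x : ℕ), ReflTransGen (Step bmmR) (subst P x N) (subst P x N')
  | .var y, x => by
      simp only [subst]
      split
      · exact ReflTransGen.single h
      · exact ReflTransGen.refl
  | .lam y M, x => by
      simp only [subst]
      split
      · exact ReflTransGen.refl
      · exact rtg_lam (subst_step h M x)
  | .app M P, x => by
      simp only [subst]
      exact (rtg_appL (subst_step h M x)).trans (rtg_appR (subst_step h P x))
  | .mu b M, x => rtg_mu (subst_step h M x)
  | .name b M, x => rtg_name (subst_step h M x)

lemma msubst_step {N N' : Lam} (h : Step bmmR N N') (d : Dir) :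
    ∀ (P : Lam) (a : ℕ), ReflTransGen (Step bmmR) (msubst P a d N) (msubst P a d N')
  | .var y, a => ReflTransGen.refl
  | .lam y M, a => rtg_lam (msubst_step h d M a)
  | .app M P, a => (rtg_appL (msubst_step h d M a)).trans (rtg_appR (msubst_step h d P a))
  | .mu b M, a => by
      simp only [msubst]
      split
      · exact ReflTransGen.refl
      · exact rtg_mu (msubst_step h d M a)
  | .name b M, a => by
      simp only [msubst]
      split
      · cases d with
        | r => exact rtg_name ((rtg_appL (msubst_step h .r M a)).trans
            (rtg_appR (ReflTransGen.single h)))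
        | l => exact rtg_name ((rtg_appL (ReflTransGen.single h)).trans
            (rtg_appR (msubst_step h .l M a)))
      · exact rtg_name (msubst_step h d M a)

/-- with the βμμ′-reduction, if M and N are SN but (M N) is not, then
either M ▷* λy P with P[y:=N] not SN, or M ▷* μα P with P[α=_r N] not SN, or
N ▷* μα P with P[α=_l M] not SN. -/
theorem app_not_SN_cases_beta :
    ∀ M N : Lam, SN (Step bmmR) M → SN (Step bmmR) N → ¬ SN (Step bmmR) (.app M N) →
      (∃ (y : ℕ) (P : Lam), Relation.ReflTransGen (Step bmmR) M (.lam y P) ∧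
        ¬ SN (Step bmmR) (subst P y N)) ∨
      (∃ (α : ℕ) (P : Lam), Relation.ReflTransGen (Step bmmR) M (.mu α P) ∧
        ¬ SN (Step bmmR) (msubst P α .r N)) ∨
      (∃ (α : ℕ) (P : Lam), Relation.ReflTransGen (Step bmmR) N (.mu α P) ∧
        ¬ SN (Step bmmR) (msubst P α .l M)) := by
  intro M N hM
  induction hM generalizing N with
  | intro M hMa ihM =>
    intro hN
    induction hN with
    | intro N hNa ihN =>
      intro hnot
      obtain ⟨b, hstep, hb⟩ := not_sn_step hnot
      cases hstep with
      | base hr =>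
        rcases hr with h | h | h
        · cases h with
          | mk x P Q => exact Or.inl ⟨x, P, ReflTransGen.refl, hb⟩
        · cases h with
          | mk α P Q =>
            exact Or.inr (Or.inl ⟨α, P, ReflTransGen.refl, fun hs => hb (sn_mu hs)⟩)
        · cases h with
          | mk α P Q =>
            exact Or.inr (Or.inr ⟨α, P, ReflTransGen.refl, fun hs => hb (sn_mu hs)⟩)
      | appL hs =>
        rcases ihM _ hs N (Acc.intro N hNa) hb with ⟨y,P,hr,hP⟩ | ⟨α,P,hr,hP⟩ | ⟨α,P,hr,hP⟩
        · exact Or.inl ⟨y, P, ReflTransGen.head hs hr, hP⟩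
        · exact Or.inr (Or.inl ⟨α, P, ReflTransGen.head hs hr, hP⟩)
        · exact Or.inr (Or.inr ⟨α, P, hr,
            fun hsn => hP (sn_of_rtg hsn (msubst_step hs .l P α))⟩)
      | appR hs =>
        rcases ihN _ hs hb with ⟨y,P,hr,hP⟩ | ⟨α,P,hr,hP⟩ | ⟨α,P,hr,hP⟩
        · exact Or.inl ⟨y, P, hr, fun hsn => hP (sn_of_rtg hsn (subst_step hs P y))⟩
        · exact Or.inr (Or.inl ⟨α, P, hr,
            fun hsn => hP (sn_of_rtg hsn (msubst_step hs .r P α))⟩)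
        · exact Or.inr (Or.inr ⟨α, P, ReflTransGen.head hs hr, hP⟩)


end SymLM
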